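/- arXiv:2004.13216 — 4 statements merged into one kernel-verified Lean document; each statement's English description precedes it below -/
import Mathlib

section
/- Let s, i : ℝ → ℝ be differentiable functions satisfying the non-dimensional SIR equations s' = -R₀·i·s and i' = (R₀·s - 1)·i with R₀ ≥ 0 and nonnegative initial conditions s(0) = s₀ ≥ 0, i(0) = i₀ ≥ 0. Then s(τ) ≥ 0 and i(τ) ≥ 0 for all τ ≥ 0. -/
lemma lin_ode_nonneg (f x : ℝ → ℝ) (hf : Continuous f) (hx : Differentiable ℝ x)
    (hode : ∀ τ, deriv x τ = f τ * x τ) (h0 : 0 ≤ x 0) : ∀ τ, 0 ≤ x τ := by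
  set F : ℝ → ℝ := fun τ => ∫ t in (0:ℝ)..τ, f t with hF
  have hFd : ∀ τ, HasDerivAt F (f τ) τ := fun τ =>
    (hf.integral_hasStrictDerivAt 0 τ).hasDerivAt
  set g : ℝ → ℝ := fun τ => x τ * Real.exp (-F τ) with hg
  have hgd : ∀ τ, HasDerivAt g 0 τ := by
    intro τ
    have h1 : HasDerivAt x (f τ * x τ) τ := (hode τ) ▸ (hx τ).hasDerivAt
    have h2 : HasDerivAt (fun τ => Real.exp (-F τ)) (-f τ * Real.exp (-F τ)) τ := by
      have := (((hFd τ).neg).exp)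
      simpa [mul_comm] using this
    have := h1.fun_mul h2
    refine this.congr_deriv ?_
    ring
  have hconst : ∀ τ, g τ = g 0 :=
    fun τ => is_const_of_deriv_eq_zero (fun t => (hgd t).differentiableAt)
      (fun t => (hgd t).deriv) τ 0
  intro τ
  have h1 : x τ = g 0 * Real.exp (F τ) := by
    have h := hconst τ
    have h2 : x τ * Real.exp (-F τ) * Real.exp (F τ) = g 0 * Real.exp (F τ) := by
      rw [show x τ * Real.exp (-F τ) = g τ from rfl, h]
    rwa [mul_assoc, ← Real.exp_add, neg_add_cancel, Real.exp_zero, mul_one] at h2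
  rw [h1]
  have hg0 : 0 ≤ g 0 := by
    simp only [hg]
    exact mul_nonneg h0 (Real.exp_pos _).le
  exact mul_nonneg hg0 (Real.exp_pos _).le

theorem sir_nonneg (R₀ s₀ i₀ : ℝ) (s i : ℝ → ℝ)
    (hR : 0 ≤ R₀) (hs : Differentiable ℝ s) (hi : Differentiable ℝ i)
    (hode_s : ∀ τ, deriv s τ = -R₀ * i τ * s τ)
    (hode_i : ∀ τ, deriv i τ = (R₀ * s τ - 1) * i τ)
    (hs0 : s 0 = s₀) (hi0 : i 0 = i₀) (hs₀ : 0 ≤ s₀) (hi₀ : 0 ≤ i₀) :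
    ∀ τ : ℝ, 0 ≤ τ → 0 ≤ s τ ∧ 0 ≤ i τ := by
  intro τ _
  constructor
  · exact lin_ode_nonneg (fun t => -R₀ * i t) s
      ((((continuous_const (y := R₀)).mul hi.continuous)).neg.congr fun t => by simp only [Pi.neg_apply, Pi.mul_apply]; ring) hs hode_s (hs0 ▸ hs₀) τ
  · exact lin_ode_nonneg (fun t => R₀ * s t - 1) i
      ((continuous_const.mul hs.continuous).sub continuous_const) hi hode_i (hi0 ▸ hi₀) τ
end

section
/- Let s, i : ℝ → ℝ solve the non-dimensional SIR system s' = -R₀·i·s, i' = (R₀·s - 1)·i on [0, T] with s(τ) > 0 and i(τ) > 0 for all τ ∈ [0, T], R₀ > 0, s(0) = s₀, i(0) = i₀. Then for all τ ∈ [0, T]: i(τ) = i₀ + s₀ - s(τ) - (1/R₀)·log(s₀ / s(τ)). -/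
theorem sir_phase_space (R₀ s₀ i₀ T : ℝ) (s i : ℝ → ℝ)
    (hR : 0 < R₀) (hT : 0 < T)
    (hs : Differentiable ℝ s) (hi : Differentiable ℝ i)
    (hode_s : ∀ τ ∈ Set.Icc (0:ℝ) T, deriv s τ = -R₀ * i τ * s τ)
    (hode_i : ∀ τ ∈ Set.Icc (0:ℝ) T, deriv i τ = (R₀ * s τ - 1) * i τ)
    (hspos : ∀ τ ∈ Set.Icc (0:ℝ) T, 0 < s τ)
    (hipos : ∀ τ ∈ Set.Icc (0:ℝ) T, 0 < i τ)
    (hs0 : s 0 = s₀) (hi0 : i 0 = i₀) :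
    ∀ τ ∈ Set.Icc (0:ℝ) T,
      i τ = i₀ + s₀ - s τ - (1 / R₀) * Real.log (s₀ / s τ) := by
  set F : ℝ → ℝ := fun τ => i τ + s τ - (1 / R₀) * Real.log (s τ) with hF
  have hconst : ∀ τ ∈ Set.Icc (0:ℝ) T, F τ = F 0 := by
    apply constant_of_has_deriv_right_zero
    · exact (hi.continuous.continuousOn.add hs.continuous.continuousOn).sub
        (continuousOn_const.mul
          ((hs.continuous.continuousOn).log (fun x hx => (hspos x hx).ne')))
    · intro x hx
      have hxI : x ∈ Set.Icc (0:ℝ) T := Set.Ico_subset_Icc_self hx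
      have hsx : s x ≠ 0 := (hspos x hxI).ne'
      have h1 : HasDerivAt s (deriv s x) x := (hs x).hasDerivAt
      have h2 : HasDerivAt i (deriv i x) x := (hi x).hasDerivAt
      have hlog : HasDerivAt (fun τ => Real.log (s τ)) (deriv s x / s x) x :=
        h1.log hsx
      have hFd : HasDerivAt F
          (deriv i x + deriv s x - (1 / R₀) * (deriv s x / s x)) x :=
        (h2.add h1).sub (hlog.const_mul (1 / R₀))
      have hzero : deriv i x + deriv s x - (1 / R₀) * (deriv s x / s x) = 0 := by
        rw [hode_i x hxI, hode_s x hxI]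
        field_simp
        ring
      rw [hzero] at hFd
      exact hFd.hasDerivWithinAt
  intro τ hτ
  have h := hconst τ hτ
  have h0I : (0:ℝ) ∈ Set.Icc (0:ℝ) T := ⟨le_refl 0, hT.le⟩
  have hlogdiv : Real.log (s₀ / s τ) = Real.log s₀ - Real.log (s τ) :=
    Real.log_div (by rw [← hs0]; exact (hspos 0 h0I).ne') (hspos τ hτ).ne'
  simp only [hF, hs0, hi0] at h
  rw [hlogdiv]
  linarith
end

section
/- Let R₀ > 1 and 0 < s₀ ≤ 1. Then the equation log(s₀/x) = R₀·(1 - x) has a solution x with 0 < x < s₀. -/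
theorem sir_final_size_root (R₀ s₀ : ℝ) (hR : 1 < R₀) (hs₀ : 0 < s₀) (hs₀1 : s₀ ≤ 1) :
    ∃ x : ℝ, 0 < x ∧ x < s₀ ∧ Real.log (s₀ / x) = R₀ * (1 - x) := by
  have hR0 : (0:ℝ) < R₀ := lt_trans one_pos hR
  -- find upper endpoint c with f c < 0
  obtain ⟨c, hc0, hcs, hc⟩ : ∃ c, 0 < c ∧ c ≤ s₀ ∧ Real.log (s₀ / c) < R₀ * (1 - c) := by
    rcases eq_or_lt_of_le hs₀1 with h1 | h1
    · -- s₀ = 1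
      set c : ℝ := (1/R₀ + 1)/2 with hcdef
      have hRi : 1/R₀ < 1 := by
        rw [div_lt_one hR0]; exact hR
      have hRi0 : 0 < 1/R₀ := by positivity
      have hc1 : c < 1 := by rw [hcdef]; linarith
      have hc0 : 0 < c := by rw [hcdef]; linarith
      have hRc : 1 < R₀ * c := by
        have : 1/R₀ < c := by rw [hcdef]; linarith
        have := (div_lt_iff₀ hR0).mp (by rw [hcdef]; linarith : 1/R₀ < c)
        linarith [mul_comm c R₀ ▸ this]
      refine ⟨c, hc0, by linarith [h1.symm ▸ hc1.le], ?_⟩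
      rw [h1]
      have hlog : Real.log (1 / c) < 1 / c - 1 :=
        Real.log_lt_sub_one_of_pos (by positivity)
          (by
            have : (1:ℝ) < 1 / c := (one_lt_div hc0).mpr hc1
            linarith)
      have hinv : (1 / c) * c = 1 := by field_simp
      nlinarith [hlog, hinv, hc0, mul_pos (sub_pos.mpr hRc) (sub_pos.mpr hc1),
        mul_pos hc0 (sub_pos.mpr hc1)]
    · -- s₀ < 1
      refine ⟨s₀, hs₀, le_refl _, ?_⟩
      rw [div_self (ne_of_gt hs₀), Real.log_one]
      exact mul_pos hR0 (by linarith)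
  -- lower endpoint a with f a > 0
  set a : ℝ := c * Real.exp (-(R₀ + 1)) with hadef
  have ha0 : 0 < a := mul_pos hc0 (Real.exp_pos _)
  have hac : a < c := by
    have : Real.exp (-(R₀ + 1)) < 1 := Real.exp_lt_one_iff.mpr (by linarith)
    calc a = c * Real.exp (-(R₀ + 1)) := rfl
    _ < c * 1 := by exact mul_lt_mul_of_pos_left this hc0
    _ = c := mul_one c
  have ha : R₀ * (1 - a) < Real.log (s₀ / a) := by
    have hlogdiv : Real.log (s₀ / a) = Real.log (s₀ / c) + (R₀ + 1) := by
      rw [hadef, Real.log_div (ne_of_gt hs₀) (ne_of_gt (mul_pos hc0 (Real.exp_pos _))),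
        Real.log_mul (ne_of_gt hc0) (ne_of_gt (Real.exp_pos _)), Real.log_exp,
        Real.log_div (ne_of_gt hs₀) (ne_of_gt hc0)]
      ring
    have hlog0 : 0 ≤ Real.log (s₀ / c) :=
      Real.log_nonneg ((one_le_div hc0).mpr hcs)
    have : R₀ * (1 - a) < R₀ := by nlinarith
    linarith
  -- IVT
  set f : ℝ → ℝ := fun x => Real.log (s₀ / x) - R₀ * (1 - x) with hfdef
  have hcont : ContinuousOn f (Set.Icc a c) := by
    apply ContinuousOn.sub
    · apply ContinuousOn.log
      · exact continuousOn_const.div continuousOn_id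
          (fun x hx => ne_of_gt (lt_of_lt_of_le ha0 hx.1))
      · intro x hx
        exact ne_of_gt (div_pos hs₀ (lt_of_lt_of_le ha0 hx.1))
    · exact (continuous_const.mul (continuous_const.sub continuous_id)).continuousOn
  have hmem : (0:ℝ) ∈ Set.Icc (f c) (f a) := by
    constructor
    · simp only [hfdef]; linarith
    · simp only [hfdef]; linarith
  obtain ⟨x, hx, hfx⟩ := intermediate_value_Icc' hac.le hcont hmem
  refine ⟨x, lt_of_lt_of_le ha0 hx.1, ?_, by
    have : Real.log (s₀ / x) - R₀ * (1 - x) = 0 := hfx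
    linarith⟩
  rcases lt_or_eq_of_le (le_trans hx.2 hcs) with h | h
  · exact h
  · exfalso
    have hxc : x = c := le_antisymm hx.2 (h ▸ hcs)
    have : f c = 0 := hxc ▸ hfx
    simp only [hfdef] at this
    linarith
end

section
/- Let s, i : [0, T] → ℝ solve the fSIR system with s, i > 0 on [0, T], initial data s(0) = s₀, i(0) = i₀. Then for all τ ∈ [0, T]: i(τ) = s₀ + i₀ - s(τ) + (1/R₀)·log(s(τ)/s₀) - ∫₀^τ i(σ)·κ(i(σ))/(1 + κ(i(σ))) dσ. -/
theorem fsir_phase_space (R₀ s₀ i₀ T : ℝ) (κ : ℝ → ℝ) (s i : ℝ → ℝ)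
    (hR : 0 < R₀) (hT : 0 < T) (hκc : Continuous κ)
    (hκnn : ∀ x, 0 ≤ κ x) (hκmono : Monotone κ) (hκ0 : κ 0 = 0)
    (hs : Differentiable ℝ s) (hi : Differentiable ℝ i)
    (hode_s : ∀ τ ∈ Set.Icc (0:ℝ) T,
      deriv s τ = -(R₀ / (1 + κ (i τ))) * s τ * i τ)
    (hode_i : ∀ τ ∈ Set.Icc (0:ℝ) T,
      deriv i τ = ((R₀ / (1 + κ (i τ))) * s τ - 1) * i τ)
    (hspos : ∀ τ ∈ Set.Icc (0:ℝ) T, 0 < s τ)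
    (hipos : ∀ τ ∈ Set.Icc (0:ℝ) T, 0 < i τ)
    (hs0 : s 0 = s₀) (hi0 : i 0 = i₀) :
    ∀ τ ∈ Set.Icc (0:ℝ) T,
      i τ = s₀ + i₀ - s τ + (1 / R₀) * Real.log (s τ / s₀)
        - ∫ σ in (0:ℝ)..τ, i σ * κ (i σ) / (1 + κ (i σ)) := by
  set g : ℝ → ℝ := fun σ => i σ * κ (i σ) / (1 + κ (i σ)) with hg_def
  have hden : ∀ x : ℝ, (0:ℝ) < 1 + κ x := fun x => by linarith [hκnn x]
  have hgc : Continuous g := by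
    apply Continuous.div (hi.continuous.mul (hκc.comp hi.continuous))
      (continuous_const.add (hκc.comp hi.continuous))
    intro x; exact ne_of_gt (hden (i x))
  set F : ℝ → ℝ := fun t =>
    i t + s t - (1 / R₀) * (Real.log (s t) - Real.log s₀)
      + ∫ σ in (0:ℝ)..t, g σ with hF_def
  have hFd : ∀ τ ∈ Set.Icc (0:ℝ) T, HasDerivAt F 0 τ := by
    intro τ hτ
    have hsτ := hspos τ hτ
    have hk := hden (i τ)
    have h1 : HasDerivAt s (deriv s τ) τ := (hs τ).hasDerivAt
    have h2 : HasDerivAt i (deriv i τ) τ := (hi τ).hasDerivAt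
    have h3 : HasDerivAt (fun t => Real.log (s t)) (deriv s τ / s τ) τ :=
      h1.log (ne_of_gt hsτ)
    have h4 : HasDerivAt (fun t => ∫ σ in (0:ℝ)..t, g σ) (g τ) τ :=
      intervalIntegral.integral_hasDerivAt_right
        (hgc.intervalIntegrable _ _)
        (hgc.stronglyMeasurableAtFilter _ _)
        hgc.continuousAt
    have hD : HasDerivAt F
        (deriv i τ + deriv s τ - (1 / R₀) * (deriv s τ / s τ) + g τ) τ := by
      exact ((h2.add h1).sub ((h3.sub_const _).const_mul _)).add h4
    convert hD using 1
    rw [hode_s τ hτ, hode_i τ hτ]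
    have hR' : R₀ ≠ 0 := ne_of_gt hR
    have hs' : s τ ≠ 0 := ne_of_gt hsτ
    have hk' : 1 + κ (i τ) ≠ 0 := ne_of_gt hk
    simp only [hg_def]
    field_simp
    ring
  have hFc : ContinuousOn F (Set.Icc 0 T) := fun x hx =>
    (hFd x hx).continuousAt.continuousWithinAt
  have hconst : ∀ τ ∈ Set.Icc (0:ℝ) T, F τ = F 0 := by
    intro τ hτ
    have := constant_of_has_deriv_right_zero (f := F) hFc
      (fun x hx => (hFd x (Set.mem_Icc_of_Ico hx)).hasDerivWithinAt) τ hτ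
    exact this
  intro τ hτ
  have h0 : F 0 = s₀ + i₀ := by
    simp [hF_def, hs0, hi0, intervalIntegral.integral_same]
    ring
  have hFτ := (hconst τ hτ).trans h0
  have hlog : Real.log (s τ / s₀) = Real.log (s τ) - Real.log s₀ := by
    rw [Real.log_div (ne_of_gt (hspos τ hτ)) (ne_of_gt (hs0 ▸ hspos 0 ⟨le_refl _, le_of_lt hT⟩))]
  simp only [hF_def] at hFτ
  rw [hlog]
  linarith
end
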